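/- Let $m \ge 1$ and let $\ell_1, \dots, \ell_m$ be positive integers with $\gcd(\ell_1, \dots, \ell_m) = 1$. Let $T = \{ (u^{\ell_1}, \dots, u^{\ell_m}) : u \in \mathbb{C}^\times \} \le (\mathbb{C}^\times)^m$, let $D$ be a finite subgroup of $(\mathbb{C}^\times)^m$, and let $G$ be the subgroup of $(\mathbb{C}^\times)^m$ generated by $D$ and $T$. For $I \in \mathbb{Z}^m$ and $g \in (\mathbb{C}^\times)^m$ write $g^I = \prod_j g_j^{i_j}$, and let $L_G = \{ I \in \mathbb{Z}^m : g^I = 1 \text{ for all } g \in G \}$. Then the quotient group $G/T$ is finite, and it is isomorphic to the torsion subgroup of $\hat{G} = \mathbb{Z}^m / L_G$. -/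

import Mathlib

set_option maxHeartbeats 1000000

open Finset in
private def NWmchar {m : ℕ} (I : Fin m → ℤ) : (Fin m → ℂˣ) →* ℂˣ where
  toFun g := ∏ j, g j ^ I j
  map_one' := by simp
  map_mul' x y := by simp [mul_zpow, Finset.prod_mul_distrib]

private lemma NWmchar_apply {m : ℕ} (I : Fin m → ℤ) (g : Fin m → ℂˣ) :
    NWmchar I g = ∏ j, g j ^ I j := rfl

private lemma NWmchar_add {m : ℕ} (I J : Fin m → ℤ) (g : Fin m → ℂˣ) :
    NWmchar (I + J) g = NWmchar I g * NWmchar J g := by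
  simp [NWmchar, zpow_add, Finset.prod_mul_distrib]

private lemma NWmchar_neg {m : ℕ} (I : Fin m → ℤ) (g : Fin m → ℂˣ) :
    NWmchar (-I) g = (NWmchar I g)⁻¹ := by
  simp [NWmchar, zpow_neg]

private lemma NWmchar_sub {m : ℕ} (I J : Fin m → ℤ) (g : Fin m → ℂˣ) :
    NWmchar (I - J) g = NWmchar I g * (NWmchar J g)⁻¹ := by
  rw [sub_eq_add_neg, NWmchar_add, NWmchar_neg]

private lemma NWmchar_zsmul {m : ℕ} (n : ℤ) (I : Fin m → ℤ) (g : Fin m → ℂˣ) :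
    NWmchar (n • I) g = NWmchar I g ^ n := by
  simp only [NWmchar_apply, Pi.smul_apply, smul_eq_mul, mul_comm n, zpow_mul]
  exact Finset.prod_zpow _ _ _

private lemma NWmchar_single {m : ℕ} (j : Fin m) (g : Fin m → ℂˣ) :
    NWmchar (Pi.single j (1 : ℤ)) g = g j := by
  rw [NWmchar_apply, Finset.prod_eq_single j]
  · simp
  · intro i _ hij; simp [Pi.single_apply, hij]
  · simp

private lemma NWzpow_sum {ι : Type*} (u : ℂˣ) (s : Finset ι) (c : ι → ℤ) :
    u ^ (∑ j ∈ s, c j) = ∏ j ∈ s, u ^ c j := by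
  induction s using Finset.cons_induction with
  | empty => simp
  | cons j s hj ih => rw [Finset.sum_cons, Finset.prod_cons, zpow_add, ih]

private lemma NWmchar_upow {m : ℕ} (I : Fin m → ℤ) (ℓ : Fin m → ℕ) (u : ℂˣ) :
    NWmchar I (fun j => u ^ ℓ j) = u ^ (∑ j, (ℓ j : ℤ) * I j) := by
  rw [NWmchar_apply, NWzpow_sum]
  refine Finset.prod_congr rfl fun j _ => ?_
  rw [← zpow_natCast u (ℓ j), ← zpow_mul]

private lemma NWbezout {ι : Type*} [DecidableEq ι] (s : Finset ι) (f : ι → ℕ) :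
    ∃ a : ι → ℤ, ∑ j ∈ s, (f j : ℤ) * a j = ((s.gcd f : ℕ) : ℤ) := by
  induction s using Finset.induction_on with
  | empty => exact ⟨0, by simp⟩
  | insert j s hj ih =>
    obtain ⟨a, ha⟩ := ih
    refine ⟨fun i => if i = j then (f j).gcdA (s.gcd f) else a i * (f j).gcdB (s.gcd f), ?_⟩
    rw [Finset.sum_insert hj, Finset.gcd_insert]
    have : ∀ i ∈ s, (f i : ℤ) * (if i = j then (f j).gcdA (s.gcd f) else a i * (f j).gcdB (s.gcd f))
        = ((f i : ℤ) * a i) * (f j).gcdB (s.gcd f) := by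
      intro i hi
      have : i ≠ j := fun h => hj (h ▸ hi)
      simp [this]; ring
    rw [Finset.sum_congr rfl this, ← Finset.sum_mul, ha]
    have hg : gcd (f j) (s.gcd f) = Nat.gcd (f j) (s.gcd f) := rfl
    rw [hg, Nat.gcd_eq_gcd_ab]
    simp

private lemma NWsep_eq_top {F : Type*} [CommGroup F] [Finite F]
    (H : Subgroup (F →* ℂˣ))
    (hsep : ∀ a : F, a ≠ 1 → ∃ ψ ∈ H, ψ a ≠ 1) : H = ⊤ := by
  haveI : NeZero ((Monoid.exponent F : ℂ)) :=
    ⟨Nat.cast_ne_zero.mpr Monoid.exponent_ne_zero_of_finite⟩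
  obtain ⟨e⟩ := CommGroup.monoidHom_mulEquiv_of_hasEnoughRootsOfUnity F ℂ
  haveI : Finite (F →* ℂˣ) := Finite.of_equiv F e.symm.toEquiv
  haveI : Finite ↥H := inferInstance
  haveI : NeZero ((Monoid.exponent ↥H : ℂ)) :=
    ⟨Nat.cast_ne_zero.mpr Monoid.exponent_ne_zero_of_finite⟩
  obtain ⟨eH⟩ := CommGroup.monoidHom_mulEquiv_of_hasEnoughRootsOfUnity ↥H ℂ
  haveI : Finite (↥H →* ℂˣ) := Finite.of_equiv ↥H eH.symm.toEquiv
  let ev : F →* (↥H →* ℂˣ) :=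
    { toFun := fun a =>
        { toFun := fun ψ => ψ.1 a
          map_one' := rfl
          map_mul' := fun ψ φ => rfl }
      map_one' := by ext ψ; simp
      map_mul' := fun a b => by ext ψ; simp }
  have hinj : Function.Injective ev := by
    rw [injective_iff_map_eq_one]
    intro a ha
    by_contra hne
    obtain ⟨ψ, hψ, hψa⟩ := hsep a hne
    exact hψa (congrArg (fun φ => φ ⟨ψ, hψ⟩) ha)
  have h1 : Nat.card F ≤ Nat.card (↥H →* ℂˣ) := Nat.card_le_card_of_injective ev hinj
  have h2 : Nat.card (↥H →* ℂˣ) = Nat.card ↥H := Nat.card_congr eH.toEquiv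
  have h3 : Nat.card (F →* ℂˣ) = Nat.card F := Nat.card_congr e.toEquiv
  exact Subgroup.eq_top_of_le_card H (by omega)


/-- Second part of Proposition 4.1 of Neumann–Wahl, "The End Curve Theorem for normal
complex surface singularities".  Let `ℓ 0, …, ℓ (m-1)` be positive integers with
gcd `1`, `T = {(u^(ℓ 0), …, u^(ℓ (m-1))) : u ∈ ℂ^×} ≤ (ℂ^×)^m`, `D` a finite
subgroup of `(ℂ^×)^m`, and `G = D ⊔ T`.  With
`L_G = {I ∈ ℤ^m : g^I = 1 ∀ g ∈ G}`, the group of components `F = G/T` is finite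
and isomorphic to the torsion subgroup of `Ĝ = ℤ^m / L_G`. -/
theorem component_group_iso_torsion (m : ℕ) (hm : 1 ≤ m)
    (ℓ : Fin m → ℕ) (hℓ : ∀ j, 0 < ℓ j)
    (hgcd : Finset.gcd Finset.univ ℓ = 1)
    (T : Subgroup (Fin m → ℂˣ))
    (hT : (T : Set (Fin m → ℂˣ)) = {y | ∃ u : ℂˣ, y = fun j => u ^ ℓ j})
    (D : Subgroup (Fin m → ℂˣ)) (hD : Finite D)
    (G : Subgroup (Fin m → ℂˣ)) (hG : G = D ⊔ T)
    (LG : AddSubgroup (Fin m → ℤ))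
    (hLG : ∀ I : Fin m → ℤ, I ∈ LG ↔ ∀ g ∈ G, (∏ j, (g j) ^ (I j)) = 1) :
    Finite (↥G ⧸ T.subgroupOf G) ∧
    Nonempty ((↥G ⧸ T.subgroupOf G) ≃*
      Multiplicative ↥(AddCommGroup.torsion ((Fin m → ℤ) ⧸ LG))) := by
  have hDG : D ≤ G := hG ▸ le_sup_left
  have hTG : T ≤ G := hG ▸ le_sup_right
  have hTmem : ∀ u : ℂˣ, (fun j => u ^ ℓ j) ∈ T := by
    intro u
    have : (fun j => u ^ ℓ j) ∈ (T : Set (Fin m → ℂˣ)) := by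
      rw [hT]; exact ⟨u, rfl⟩
    exact this
  have hTel : ∀ t ∈ T, ∃ u : ℂˣ, t = fun j => u ^ ℓ j := by
    intro t ht
    have : t ∈ (T : Set (Fin m → ℂˣ)) := ht
    rw [hT] at this
    exact this
  -- Part 1 : finiteness
  have hFsurj : Function.Surjective
      (fun d : ↥D => (QuotientGroup.mk ⟨d.1, hDG d.2⟩ : ↥G ⧸ T.subgroupOf G)) := by
    intro x
    obtain ⟨g, rfl⟩ := QuotientGroup.mk_surjective x
    have hg : g.1 ∈ D ⊔ T := hG ▸ g.2
    rw [Subgroup.mem_sup] at hg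
    obtain ⟨d, hd, t, ht, hdt⟩ := hg
    refine ⟨⟨d, hd⟩, ?_⟩
    rw [QuotientGroup.eq, Subgroup.mem_subgroupOf]
    show d⁻¹ * g.1 ∈ T
    have : d⁻¹ * g.1 = t := by rw [← hdt]; group
    rw [this]; exact ht
  haveI hFin : Finite (↥G ⧸ T.subgroupOf G) := Finite.of_surjective _ hFsurj
  refine ⟨hFin, ?_⟩
  -- the "degree-zero" subgroup S of ℤ^m
  let σ : (Fin m → ℤ) →+ ℤ :=
    { toFun := fun I => ∑ j, (ℓ j : ℤ) * I j
      map_zero' := by simp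
      map_add' := fun x y => by simp [mul_add, Finset.sum_add_distrib] }
  let S : AddSubgroup (Fin m → ℤ) := σ.ker
  have hSmem : ∀ I : Fin m → ℤ, I ∈ S ↔ ∑ j, (ℓ j : ℤ) * I j = 0 := fun I => Iff.rfl
  have hmT : ∀ I ∈ S, ∀ t ∈ T, NWmchar I t = 1 := by
    intro I hI t ht
    obtain ⟨u, rfl⟩ := hTel t ht
    rw [NWmchar_upow, (hSmem I).mp hI, zpow_zero]
  -- LG ≤ S
  have hLGS : LG ≤ S := by
    intro I hI
    set u2 : ℂˣ := Units.mk0 (2 : ℂ) two_ne_zero with hu2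
    have h2 : u2 ^ (∑ j, (ℓ j : ℤ) * I j) = 1 := by
      have hg := (hLG I).mp hI _ (hTG (hTmem u2))
      rw [← NWmchar_upow]
      exact hg
    have habs : (2 : ℝ) ^ (∑ j, (ℓ j : ℤ) * I j) = (2 : ℝ) ^ (0 : ℤ) := by
      have hc : ((2 : ℂ)) ^ (∑ j, (ℓ j : ℤ) * I j) = 1 := by
        have := congrArg Units.val h2
        simpa [hu2] using this
      have := congrArg (‖·‖) hc
      rw [norm_zpow] at this
      simpa using this
    exact (hSmem I).mpr (zpow_right_injective₀ (by norm_num : (0:ℝ) < 2) (by norm_num) habs)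
  -- every element of S gives a torsion class mod LG
  have hdn : ∀ d ∈ D, d ^ (Nat.card ↥D) = 1 := by
    intro d hd
    have h : (⟨d, hd⟩ : ↥D) ^ Nat.card ↥D = 1 := pow_card_eq_one'
    exact congrArg Subtype.val h
  have hncard : 0 < Nat.card ↥D := Nat.card_pos
  have htorkey : ∀ I ∈ S, (Nat.card ↥D) • I ∈ LG := by
    intro I hI
    rw [hLG]
    intro g hgG
    have hg : g ∈ D ⊔ T := hG ▸ hgG
    rw [Subgroup.mem_sup] at hg
    obtain ⟨d, hd, t, ht, rfl⟩ := hg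
    have key : NWmchar ((Nat.card ↥D : ℤ) • I) (d * t) = 1 := by
      rw [NWmchar_zsmul, map_mul, hmT I hI t ht, mul_one, zpow_natCast,
        ← map_pow, hdn d hd, map_one]
    calc (∏ j, (d * t) j ^ ((Nat.card ↥D • I) j))
        = NWmchar ((Nat.card ↥D : ℤ) • I) (d * t) := by
          rw [natCast_zsmul, NWmchar_apply]
      _ = 1 := key
  -- the map θ : S → torsion
  let θ : ↥S →+ ↥(AddCommGroup.torsion ((Fin m → ℤ) ⧸ LG)) :=
    { toFun := fun I => ⟨QuotientAddGroup.mk I.1, by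
        rw [AddCommGroup.mem_torsion, isOfFinAddOrder_iff_nsmul_eq_zero]
        refine ⟨Nat.card ↥D, hncard, ?_⟩
        have : ((Nat.card ↥D) • (QuotientAddGroup.mk I.1 : (Fin m → ℤ) ⧸ LG))
            = QuotientAddGroup.mk ((Nat.card ↥D) • I.1) :=
          (map_nsmul (QuotientAddGroup.mk' LG) _ _).symm
        rw [this]
        exact (QuotientAddGroup.eq_zero_iff _).mpr (htorkey I.1 I.2)⟩
      map_zero' := rfl
      map_add' := fun I J => rfl }
  have hθsurj : Function.Surjective θ := by
    rintro ⟨x, hx⟩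
    revert hx
    refine QuotientAddGroup.induction_on x ?_
    intro I hx
    rw [AddCommGroup.mem_torsion, isOfFinAddOrder_iff_nsmul_eq_zero] at hx
    obtain ⟨n, hn, hnI⟩ := hx
    have hnI' : n • I ∈ LG := by
      rw [← QuotientAddGroup.eq_zero_iff (N := LG)]
      have h5 : (QuotientAddGroup.mk' LG) (n • I) = 0 := by
        rw [map_nsmul, QuotientAddGroup.mk'_apply]
        exact hnI
      rw [QuotientAddGroup.mk'_apply] at h5
      exact h5
    have hIS : I ∈ S := by
      have hs := (hSmem _).mp (hLGS hnI')
      rw [hSmem]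
      have : ∑ j, (ℓ j : ℤ) * ((n • I) j) = (n : ℤ) * ∑ j, (ℓ j : ℤ) * I j := by
        rw [Finset.mul_sum]
        refine Finset.sum_congr rfl fun j _ => ?_
        simp [nsmul_eq_mul]; ring
      rw [this] at hs
      rcases mul_eq_zero.mp hs with h | h
      · exact absurd h (by exact_mod_cast hn.ne')
      · exact h
    exact ⟨⟨I, hIS⟩, Subtype.ext rfl⟩
  have hθker : θ.ker = LG.addSubgroupOf S := by
    ext I
    simp only [AddMonoidHom.mem_ker, AddSubgroup.mem_addSubgroupOf]
    constructor
    · intro h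
      exact (QuotientAddGroup.eq_zero_iff _).mp (congrArg Subtype.val h)
    · intro h
      exact Subtype.ext ((QuotientAddGroup.eq_zero_iff _).mpr h)
  -- the character map Φ : S → Hom(F, ℂˣ)
  have hliftok : ∀ I : ↥S, ∀ t : ↥G, t ∈ T.subgroupOf G →
      ((NWmchar I.1).comp G.subtype) t = 1 := by
    intro I t ht
    exact hmT I.1 I.2 t.1 (Subgroup.mem_subgroupOf.mp ht)
  let qchar : ↥S → ((↥G ⧸ T.subgroupOf G) →* ℂˣ) := fun I =>
    QuotientGroup.lift (T.subgroupOf G) ((NWmchar I.1).comp G.subtype) (hliftok I)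
  have hqchar : ∀ (I : ↥S) (g : ↥G), qchar I (QuotientGroup.mk g) = NWmchar I.1 g.1 :=
    fun I g => rfl
  let Φ : ↥S →+ Additive ((↥G ⧸ T.subgroupOf G) →* ℂˣ) :=
    { toFun := fun I => Additive.ofMul (qchar I)
      map_zero' := by
        have h1 : qchar 0 = 1 := by
          apply MonoidHom.ext
          intro x
          obtain ⟨g, rfl⟩ := QuotientGroup.mk_surjective x
          rw [hqchar]
          show NWmchar (0 : Fin m → ℤ) g.1 = (1 : (↥G ⧸ T.subgroupOf G) →* ℂˣ) (QuotientGroup.mk g)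
          simp [NWmchar_apply]
        show Additive.ofMul (qchar 0) = 0
        rw [h1]; rfl
      map_add' := fun I J => by
        have h1 : qchar (I + J) = qchar I * qchar J := by
          apply MonoidHom.ext
          intro x
          obtain ⟨g, rfl⟩ := QuotientGroup.mk_surjective x
          show NWmchar (I.1 + J.1) g.1 = qchar I (QuotientGroup.mk g) * qchar J (QuotientGroup.mk g)
          rw [hqchar, hqchar, NWmchar_add]
        show Additive.ofMul (qchar (I + J)) = Additive.ofMul (qchar I) + Additive.ofMul (qchar J)
        rw [h1]; rfl }
  have hΦker : Φ.ker = LG.addSubgroupOf S := by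
    ext I
    simp only [AddMonoidHom.mem_ker, AddSubgroup.mem_addSubgroupOf]
    rw [hLG]
    constructor
    · intro h g hgG
      have h1 : qchar I = 1 := h
      have h2 := congrArg (fun ψ : (↥G ⧸ T.subgroupOf G) →* ℂˣ =>
        ψ (QuotientGroup.mk (⟨g, hgG⟩ : ↥G))) h1
      simpa [hqchar, NWmchar_apply] using h2
    · intro h
      show Additive.ofMul (qchar I) = 0
      have h1 : qchar I = 1 := by
        apply MonoidHom.ext
        intro x
        obtain ⟨g, rfl⟩ := QuotientGroup.mk_surjective x
        have := h g.1 g.2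
        rw [hqchar]
        show NWmchar I.1 g.1 = (1 : (↥G ⧸ T.subgroupOf G) →* ℂˣ) (QuotientGroup.mk g)
        simpa [NWmchar_apply] using this
      rw [h1]; rfl
  -- monomial characters separate points of F
  have hDnotT : ∀ d : Fin m → ℂˣ, (∀ I ∈ S, NWmchar I d = 1) → d ∈ T := by
    intro d hd
    obtain ⟨a, ha⟩ := NWbezout Finset.univ ℓ
    rw [hgcd] at ha
    have hσa : ∑ j, (ℓ j : ℤ) * a j = 1 := by exact_mod_cast ha
    set u := NWmchar a d with hu
    have hcoord : ∀ j, d j = u ^ ℓ j := by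
      intro j
      set ej : Fin m → ℤ := Pi.single j (1:ℤ) with hej
      have h1 : ∑ i, (ℓ i : ℤ) * ej i = (ℓ j : ℤ) := by
        rw [Finset.sum_eq_single j]
        · simp [hej]
        · intro i _ hij
          simp [hej, Pi.single_apply, hij]
        · simp
      have hIj : (ej - (ℓ j : ℤ) • a) ∈ S := by
        rw [hSmem]
        have hterm : ∀ i : Fin m, (ℓ i : ℤ) * ((ej - (ℓ j : ℤ) • a) i)
            = (ℓ i : ℤ) * ej i - (ℓ j : ℤ) * ((ℓ i : ℤ) * a i) := by
          intro i
          simp only [Pi.sub_apply, Pi.smul_apply, smul_eq_mul]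
          ring
        rw [Finset.sum_congr rfl fun i _ => hterm i, Finset.sum_sub_distrib, h1,
          ← Finset.mul_sum, hσa]
        ring
      have h2 := hd _ hIj
      rw [NWmchar_sub, hej, NWmchar_single, NWmchar_zsmul, ← hu] at h2
      have h3 : d j = u ^ (ℓ j : ℤ) := mul_inv_eq_one.mp h2
      rw [← zpow_natCast]
      exact h3
    have : d ∈ (T : Set (Fin m → ℂˣ)) := by
      rw [hT]; exact ⟨u, funext hcoord⟩
    exact this
  let H : Subgroup ((↥G ⧸ T.subgroupOf G) →* ℂˣ) := AddSubgroup.toSubgroup' Φ.range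
  have hHmem : ∀ ψ : (↥G ⧸ T.subgroupOf G) →* ℂˣ, (∃ I : ↥S, qchar I = ψ) → ψ ∈ H := by
    intro ψ ⟨I, hI⟩
    exact ⟨I, congrArg Additive.ofMul hI⟩
  have hsep : ∀ x : ↥G ⧸ T.subgroupOf G, x ≠ 1 → ∃ ψ ∈ H, ψ x ≠ 1 := by
    intro x hx
    obtain ⟨g, rfl⟩ := QuotientGroup.mk_surjective x
    have hgT : g.1 ∉ T := by
      intro hgT
      exact hx ((QuotientGroup.eq_one_iff g).mpr (Subgroup.mem_subgroupOf.mpr hgT))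
    have hg : g.1 ∈ D ⊔ T := hG ▸ g.2
    rw [Subgroup.mem_sup] at hg
    obtain ⟨d, hd, t, ht, hdt⟩ := hg
    have hdT : d ∉ T := fun hdT => hgT (hdt ▸ T.mul_mem hdT ht)
    obtain ⟨I, hIS, hId⟩ : ∃ I ∈ S, NWmchar I d ≠ 1 := by
      by_contra hcon
      push_neg at hcon
      exact hdT (hDnotT d hcon)
    refine ⟨qchar ⟨I, hIS⟩, hHmem _ ⟨⟨I, hIS⟩, rfl⟩, ?_⟩
    rw [hqchar]
    show NWmchar I g.1 ≠ 1
    rw [← hdt, map_mul, hmT I hIS t ht, mul_one]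
    exact hId
  have hHtop : H = ⊤ := NWsep_eq_top (F := ↥G ⧸ T.subgroupOf G) H hsep
  have hΦsurj : Function.Surjective Φ := by
    intro ψ'
    have hmem : Additive.toMul ψ' ∈ H := hHtop ▸ Subgroup.mem_top _
    obtain ⟨I, hI⟩ := hmem
    exact ⟨I, hI⟩
  -- assemble
  haveI : NeZero ((Monoid.exponent (↥G ⧸ T.subgroupOf G) : ℂ)) :=
    ⟨Nat.cast_ne_zero.mpr (by exact Monoid.exponent_ne_zero_of_finite (G := ↥G ⧸ T.subgroupOf G))⟩
  obtain ⟨e⟩ := CommGroup.monoidHom_mulEquiv_of_hasEnoughRootsOfUnity (↥G ⧸ T.subgroupOf G) ℂ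
  let e1 := QuotientAddGroup.quotientKerEquivOfSurjective (H := Additive ((↥G ⧸ T.subgroupOf G) →* ℂˣ)) Φ hΦsurj
  let e2 := QuotientAddGroup.quotientKerEquivOfSurjective θ hθsurj
  let e3 := QuotientAddGroup.quotientAddEquivOfEq (hΦker.trans hθker.symm)
  exact ⟨e.symm.trans ((MulEquiv.multiplicativeAdditive _).symm.trans
    (AddEquiv.toMultiplicative ((e1.symm.trans e3).trans e2)))⟩
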